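/- Kernel properties of the ISC-induced subtyping: Define A ≤ B to mean that the singleton sequent A ⊢ B is derivable in ISC. Then: A ≤ A for all A; A ≤ B and B ≤ C imply A ≤ C; A∩B ≤ A; A∩B ≤ B; C ≤ A and C ≤ B imply C ≤ A∩B; and if K contains a constructor Ω with c(Ω) = v(Ω) = 0 and w(Ω) = 0, then A ≤ Ω for all A. -/

import Mathlib

/-- Types built from intersection and a set `K` of type constructors, each
`κ : K` having contravariant arity `c κ` and covariant arity `v κ`. -/
inductive GTy (K : Type) (c v : K → ℕ) : Type
  | inter : GTy K c v → GTy K c v → GTy K c v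
  | cons : (κ : K) → (Fin (c κ) → GTy K c v) → (Fin (v κ) → GTy K c v) → GTy K c v

/-- The sequent-style subtyping system ISC, parameterized by the width
function `w` (valued in {0,1}). Sequents `Γ ⊢ A` with `Γ` a list of types. -/
inductive ISC {K : Type} {c v : K → ℕ} (w : K → ℕ) : List (GTy K c v) → GTy K c v → Prop
  | wk {Γ Δ : List (GTy K c v)} {C : GTy K c v} (κ : K)
      (f : Fin (c κ) → GTy K c v) (g : Fin (v κ) → GTy K c v) :
      ISC w (Γ ++ Δ) C → ISC w (Γ ++ GTy.cons κ f g :: Δ) C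
  | interR {Γ : List (GTy K c v)} {A B : GTy K c v} :
      ISC w Γ A → ISC w Γ B → ISC w Γ (GTy.inter A B)
  | interL {Γ Δ : List (GTy K c v)} {A B C : GTy K c v} :
      ISC w (Γ ++ A :: B :: Δ) C → ISC w (Γ ++ GTy.inter A B :: Δ) C
  | constr (κ : K) (k : ℕ) (hk : w κ ≤ k)
      (As : Fin (c κ) → Fin k → GTy K c v) (Bs : Fin (v κ) → Fin k → GTy K c v)
      (A : Fin (c κ) → GTy K c v) (B : Fin (v κ) → GTy K c v) :
      (∀ j i, ISC w [A j] (As j i)) →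
      (∀ j, ISC w (List.ofFn (Bs j)) (B j)) →
      ISC w (List.ofFn fun i => GTy.cons κ (fun j => As j i) (fun j => Bs j i))
        (GTy.cons κ A B)

namespace ISCKernel
variable {K : Type} {c v : K → ℕ}

def gsize : GTy K c v → ℕ
  | .inter A B => gsize A + gsize B + 1
  | .cons _ f g => (Finset.univ.sum fun j => gsize (f j)) +
      (Finset.univ.sum fun j => gsize (g j)) + 1

lemma gsize_lt_inter_l (A B : GTy K c v) : gsize A < gsize (GTy.inter A B) := by
  simp [gsize]

lemma gsize_lt_inter_r (A B : GTy K c v) : gsize B < gsize (GTy.inter A B) := by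
  simp [gsize]

lemma gsize_lt_cons_l (κ : K) (f : Fin (c κ) → GTy K c v) (g : Fin (v κ) → GTy K c v)
    (j : Fin (c κ)) : gsize (f j) < gsize (GTy.cons κ f g) := by
  have : gsize (f j) ≤ Finset.univ.sum fun j => gsize (f j) :=
    Finset.single_le_sum (f := fun j => gsize (f j)) (fun _ _ => Nat.zero_le _)
      (Finset.mem_univ j)
  simp only [gsize]; omega

lemma gsize_lt_cons_l' (κ : K) (f : Fin (c κ) → GTy K c v) (g : Fin (v κ) → GTy K c v)
    (j : Fin (c κ)) {x : GTy K c v} (hx : x = f j) : gsize x < gsize (GTy.cons κ f g) :=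
  hx ▸ gsize_lt_cons_l κ f g j

lemma gsize_lt_cons_r (κ : K) (f : Fin (c κ) → GTy K c v) (g : Fin (v κ) → GTy K c v)
    (j : Fin (v κ)) : gsize (g j) < gsize (GTy.cons κ f g) := by
  have : gsize (g j) ≤ Finset.univ.sum fun j => gsize (g j) :=
    Finset.single_le_sum (f := fun j => gsize (g j)) (fun _ _ => Nat.zero_le _)
      (Finset.mem_univ j)
  simp only [gsize]; omega

lemma gsize_lt_cons_r' (κ : K) (f : Fin (c κ) → GTy K c v) (g : Fin (v κ) → GTy K c v)
    (j : Fin (v κ)) {x : GTy K c v} (hx : x = g j) : gsize x < gsize (GTy.cons κ f g) :=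
  hx ▸ gsize_lt_cons_r κ f g j

inductive ISCh (w : K → ℕ) : ℕ → List (GTy K c v) → GTy K c v → Prop
  | wk {n : ℕ} {Γ Δ : List (GTy K c v)} {C : GTy K c v} (κ : K)
      (f : Fin (c κ) → GTy K c v) (g : Fin (v κ) → GTy K c v) :
      ISCh w n (Γ ++ Δ) C → ISCh w (n + 1) (Γ ++ GTy.cons κ f g :: Δ) C
  | interR {n : ℕ} {Γ : List (GTy K c v)} {A B : GTy K c v} :
      ISCh w n Γ A → ISCh w n Γ B → ISCh w (n + 1) Γ (GTy.inter A B)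
  | interL {n : ℕ} {Γ Δ : List (GTy K c v)} {A B C : GTy K c v} :
      ISCh w n (Γ ++ A :: B :: Δ) C → ISCh w (n + 1) (Γ ++ GTy.inter A B :: Δ) C
  | constr {n : ℕ} (κ : K) (k : ℕ) (hk : w κ ≤ k)
      (As : Fin (c κ) → Fin k → GTy K c v) (Bs : Fin (v κ) → Fin k → GTy K c v)
      (A : Fin (c κ) → GTy K c v) (B : Fin (v κ) → GTy K c v) :
      (∀ j i, ISCh w n [A j] (As j i)) →
      (∀ j, ISCh w n (List.ofFn (Bs j)) (B j)) →
      ISCh w (n + 1) (List.ofFn fun i => GTy.cons κ (fun j => As j i) (fun j => Bs j i))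
        (GTy.cons κ A B)

variable {w : K → ℕ}

theorem ISCh.mono : ∀ {n : ℕ} {Γ : List (GTy K c v)} {C : GTy K c v},
    ISCh w n Γ C → ∀ {m : ℕ}, n ≤ m → ISCh w m Γ C := by
  intro n Γ C d
  induction d with
  | wk κ f g d ih =>
    intro m hm
    obtain ⟨m', rfl⟩ : ∃ m', m = m' + 1 := ⟨m - 1, by omega⟩
    exact ISCh.wk κ f g (ih (by omega))
  | interR d1 d2 ih1 ih2 =>
    intro m hm
    obtain ⟨m', rfl⟩ : ∃ m', m = m' + 1 := ⟨m - 1, by omega⟩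
    exact ISCh.interR (ih1 (by omega)) (ih2 (by omega))
  | interL d ih =>
    intro m hm
    obtain ⟨m', rfl⟩ : ∃ m', m = m' + 1 := ⟨m - 1, by omega⟩
    exact ISCh.interL (ih (by omega))
  | constr κ k hk As Bs A B h1 h2 ih1 ih2 =>
    intro m hm
    obtain ⟨m', rfl⟩ : ∃ m', m = m' + 1 := ⟨m - 1, by omega⟩
    exact ISCh.constr κ k hk As Bs A B (fun j i => ih1 j i (by omega))
      (fun j => ih2 j (by omega))

theorem perm_ofFn_exists {α : Type} : ∀ {l₁ l₂ : List α}, l₁.Perm l₂ → ∀ {k : ℕ} (f : Fin k → α),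
    l₁ = List.ofFn f → ∃ σ : Equiv.Perm (Fin k), l₂ = List.ofFn (f ∘ σ) := by
  intro l₁ l₂ p
  induction p with
  | nil => intro k f h; exact ⟨Equiv.refl _, by simpa using h⟩
  | cons x p ih =>
    intro k f h
    match k with
    | 0 => simp [List.ofFn_zero] at h
    | k + 1 =>
      rw [List.ofFn_succ] at h
      obtain ⟨hx, hl⟩ : x = f 0 ∧ _ = List.ofFn fun i => f i.succ := List.cons.inj h
      obtain ⟨σ', hσ'⟩ := ih _ hl
      refine ⟨Equiv.Perm.decomposeFin.symm (0, σ'), ?_⟩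
      rw [List.ofFn_succ, hσ', hx]
      congr 1
  | swap x y l =>
    intro k f h
    match k with
    | 0 => simp at h
    | 1 => simp [List.ofFn_succ] at h
    | k + 2 =>
      rw [List.ofFn_succ, List.ofFn_succ] at h
      obtain ⟨hy, h'⟩ := List.cons.inj h
      obtain ⟨hx, hl⟩ := List.cons.inj h'
      refine ⟨Equiv.swap 0 1, ?_⟩
      rw [List.ofFn_succ, List.ofFn_succ, hy, hx, hl]
      congr 1
  | trans p q ih1 ih2 =>
    intro k f h
    obtain ⟨σ₁, h₁⟩ := ih1 f h
    obtain ⟨σ₂, h₂⟩ := ih2 (f ∘ σ₁) h₁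
    exact ⟨σ₂.trans σ₁, h₂⟩

theorem permh : ∀ {n : ℕ} {Γ : List (GTy K c v)} {C : GTy K c v},
    ISCh w n Γ C → ∀ {Γ' : List (GTy K c v)}, Γ.Perm Γ' → ISCh w n Γ' C := by
  intro n Γ C d
  induction d with
  | @wk n Γ Δ C κ f g d ih =>
    intro Γ' p
    have hm : GTy.cons κ f g ∈ Γ' := p.mem_iff.mp (by simp)
    obtain ⟨Γ₁, Δ₁, rfl⟩ := List.append_of_mem hm
    have p' : (Γ ++ Δ).Perm (Γ₁ ++ Δ₁) :=
      ((List.perm_middle.symm.trans p).trans List.perm_middle).cons_inv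
    exact ISCh.wk κ f g (ih p')
  | interR d1 d2 ih1 ih2 =>
    intro Γ' p
    exact ISCh.interR (ih1 p) (ih2 p)
  | @interL n Γ Δ A B C d ih =>
    intro Γ' p
    have hm : GTy.inter A B ∈ Γ' := p.mem_iff.mp (by simp)
    obtain ⟨Γ₁, Δ₁, rfl⟩ := List.append_of_mem hm
    have p0 : (Γ ++ Δ).Perm (Γ₁ ++ Δ₁) :=
      ((List.perm_middle.symm.trans p).trans List.perm_middle).cons_inv
    have p' : (Γ ++ A :: B :: Δ).Perm (Γ₁ ++ A :: B :: Δ₁) :=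
      List.perm_middle.trans
        ((((List.perm_middle.trans ((p0.cons B).trans List.perm_middle.symm)).cons A)).trans
          List.perm_middle.symm)
    exact ISCh.interL (ih p')
  | @constr n κ k hk As Bs A B h1 h2 ih1 ih2 =>
    intro Γ' p
    obtain ⟨σ, rfl⟩ := perm_ofFn_exists p _ rfl
    have := ISCh.constr (w := w) κ k hk (fun j i => As j (σ i)) (fun j i => Bs j (σ i)) A B
      (fun j i => h1 j (σ i))
      (fun j => ih2 j (Equiv.Perm.ofFn_comp_perm σ (Bs j)).symm)
    exact this

theorem ofISCh : ∀ {n : ℕ} {Γ : List (GTy K c v)} {C : GTy K c v},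
    ISCh w n Γ C → ISC w Γ C := by
  intro n Γ C d
  induction d with
  | wk κ f g _ ih => exact ISC.wk κ f g ih
  | interR _ _ ih1 ih2 => exact ISC.interR ih1 ih2
  | interL _ ih => exact ISC.interL ih
  | constr κ k hk As Bs A B _ _ ih1 ih2 => exact ISC.constr κ k hk As Bs A B ih1 ih2

theorem toISCh : ∀ {Γ : List (GTy K c v)} {C : GTy K c v},
    ISC w Γ C → ∃ n, ISCh w n Γ C := by
  intro Γ C d
  induction d with
  | wk κ f g _ ih => obtain ⟨n, hn⟩ := ih; exact ⟨n + 1, ISCh.wk κ f g hn⟩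
  | interR _ _ ih1 ih2 =>
    obtain ⟨n1, h1⟩ := ih1; obtain ⟨n2, h2⟩ := ih2
    exact ⟨max n1 n2 + 1, ISCh.interR (h1.mono (le_max_left _ _)) (h2.mono (le_max_right _ _))⟩
  | interL _ ih => obtain ⟨n, hn⟩ := ih; exact ⟨n + 1, ISCh.interL hn⟩
  | constr κ k hk As Bs A B _ _ ih1 ih2 =>
    choose ns hns using ih1
    choose ms hms using ih2
    set N := (Finset.univ.sup fun j => Finset.univ.sup fun i => ns j i) +
      Finset.univ.sup fun j => ms j with hN
    refine ⟨N + 1, ISCh.constr κ k hk As Bs A B (fun j i => (hns j i).mono ?_)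
      (fun j => (hms j).mono ?_)⟩
    · calc ns j i ≤ Finset.univ.sup fun j => Finset.univ.sup fun i => ns j i := by
            refine le_trans ?_ (Finset.le_sup (Finset.mem_univ j))
            exact Finset.le_sup (Finset.mem_univ i)
        _ ≤ N := Nat.le_add_right _ _
    · calc ms j ≤ Finset.univ.sup fun j => ms j := Finset.le_sup (Finset.mem_univ j)
        _ ≤ N := Nat.le_add_left _ _

theorem weaken (E : GTy K c v) : ∀ (Γ Δ : List (GTy K c v)) (C : GTy K c v),
    ISC w (Γ ++ Δ) C → ISC w (Γ ++ E :: Δ) C := by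
  induction E with
  | inter A B ihA ihB =>
    intro Γ Δ C d
    have h1 : ISC w (Γ ++ B :: Δ) C := ihB Γ Δ C d
    have h2 : ISC w (Γ ++ A :: B :: Δ) C := ihA Γ (B :: Δ) C h1
    exact ISC.interL h2
  | cons κ f g ihf ihg =>
    intro Γ Δ C d
    exact ISC.wk κ f g d

theorem weakens : ∀ (Γ : List (GTy K c v)) {Δ : List (GTy K c v)} {C : GTy K c v},
    ISC w Δ C → ISC w (Γ ++ Δ) C := by
  intro Γ
  induction Γ with
  | nil => intro Δ C d; exact d
  | cons E Γ ih =>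
    intro Δ C d
    exact weaken E [] (Γ ++ Δ) C (ih d)

theorem invR : ∀ {Γ : List (GTy K c v)} {D : GTy K c v}, ISC w Γ D →
    ∀ {A B : GTy K c v}, D = GTy.inter A B → ISC w Γ A ∧ ISC w Γ B := by
  intro Γ D d
  induction d with
  | wk κ f g _ ih =>
    intro A B h
    obtain ⟨h1, h2⟩ := ih h
    exact ⟨ISC.wk κ f g h1, ISC.wk κ f g h2⟩
  | interR d1 d2 =>
    intro A B h
    obtain ⟨rfl, rfl⟩ := GTy.inter.inj h
    exact ⟨d1, d2⟩
  | interL _ ih =>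
    intro A B h
    obtain ⟨h1, h2⟩ := ih h
    exact ⟨ISC.interL h1, ISC.interL h2⟩
  | constr κ k hk As Bs A B _ _ =>
    intro A' B' h
    exact absurd h (by simp)

theorem invLh : ∀ {n : ℕ} {Δ' : List (GTy K c v)} {C : GTy K c v}, ISCh w n Δ' C →
    ∀ {A B : GTy K c v} {Γ : List (GTy K c v)}, Δ' = GTy.inter A B :: Γ →
    ISCh w n (A :: B :: Γ) C := by
  intro n Δ' C d
  induction d with
  | @wk n Γ₀ Δ₀ C κ f g d ih =>
    intro A B Γ h
    match Γ₀, h with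
    | [], h => exact absurd (List.head_eq_of_cons_eq h) (by simp)
    | X :: Γ₀, h =>
      obtain ⟨rfl, h2⟩ : X = GTy.inter A B ∧ Γ₀ ++ GTy.cons κ f g :: Δ₀ = Γ :=
        ⟨(List.cons.inj h).1, (List.cons.inj h).2⟩
      subst h2
      have := ih (A := A) (B := B) (Γ := Γ₀ ++ Δ₀) rfl
      exact ISCh.wk (Γ := A :: B :: Γ₀) κ f g this
  | interR d1 d2 ih1 ih2 =>
    intro A B Γ h
    exact ISCh.interR (ih1 h) (ih2 h)
  | @interL n Γ₀ Δ₀ A₀ B₀ C d ih =>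
    intro A B Γ h
    match Γ₀, h with
    | [], h =>
      obtain ⟨h1, rfl⟩ := List.cons.inj h
      obtain ⟨rfl, rfl⟩ := GTy.inter.inj h1.symm
      exact d.mono (Nat.le_succ _)
    | X :: Γ₀, h =>
      obtain ⟨rfl, h2⟩ := List.cons.inj h
      subst h2
      have := ih (A := A) (B := B) (Γ := Γ₀ ++ A₀ :: B₀ :: Δ₀) rfl
      exact ISCh.interL (Γ := A :: B :: Γ₀) this
  | constr κ k hk As Bs A B h1 h2 =>
    intro A' B' Γ h
    have hmem : GTy.inter A' B' ∈
        List.ofFn fun i => GTy.cons κ (fun j => As j i) fun j => Bs j i := by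
      rw [h]; simp
    rw [List.mem_ofFn] at hmem
    obtain ⟨i, hi⟩ := hmem
    exact absurd hi (by simp)

theorem ctrh (hw : ∀ κ, w κ ≤ 1) (n : ℕ) {Δ' : List (GTy K c v)} {C : GTy K c v}
    (d : ISCh w n Δ' C) :
    ∀ {E : GTy K c v} {Γ : List (GTy K c v)}, Δ' = E :: E :: Γ → ISCh w n (E :: Γ) C := by
  intro E Γ hΔ
  cases d with
  | @wk n Γ₀ Δ₀ C κ f g d =>
    rcases Γ₀ with _ | ⟨X1, _ | ⟨X2, Γ₀⟩⟩
    · simp only [List.nil_append] at hΔ d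
      have h1 : GTy.cons κ f g = E := (List.cons.inj hΔ).1
      have h2 : Δ₀ = E :: Γ := (List.cons.inj hΔ).2
      rw [h2] at d
      exact d.mono (Nat.le_succ n)
    · simp only [List.cons_append, List.nil_append] at hΔ d
      have h1 : X1 = E := (List.cons.inj hΔ).1
      have h2 := (List.cons.inj hΔ).2
      have h3 : GTy.cons κ f g = E := (List.cons.inj h2).1
      have h4 : Δ₀ = Γ := (List.cons.inj h2).2
      rw [h1, h4] at d
      exact d.mono (Nat.le_succ n)
    · simp only [List.cons_append] at hΔ d
      have h1 : X1 = E := (List.cons.inj hΔ).1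
      have h2 := (List.cons.inj hΔ).2
      have h3 : X2 = E := (List.cons.inj h2).1
      have h4 : Γ₀ ++ GTy.cons κ f g :: Δ₀ = Γ := (List.cons.inj h2).2
      rw [h1, h3] at d
      have d' : ISCh w n (E :: E :: (Γ₀ ++ Δ₀)) C := d
      have hc := ctrh hw n d' rfl
      have := ISCh.wk (Γ := E :: Γ₀) κ f g hc
      rw [show (E :: Γ₀) ++ GTy.cons κ f g :: Δ₀ = E :: Γ by rw [← h4]; rfl] at this
      exact this
  | @interR n Γ' A B d1 d2 =>
    subst hΔ
    exact ISCh.interR (ctrh hw n d1 rfl) (ctrh hw n d2 rfl)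
  | @interL n Γ₀ Δ₀ A₀ B₀ C d =>
    rcases Γ₀ with _ | ⟨X1, _ | ⟨X2, Γ₀⟩⟩
    · simp only [List.nil_append] at hΔ d
      have hE : GTy.inter A₀ B₀ = E := (List.cons.inj hΔ).1
      have h2 : Δ₀ = E :: Γ := (List.cons.inj hΔ).2
      rw [h2, ← hE] at d
      rw [← hE]
      have d1 : ISCh w n (GTy.inter A₀ B₀ :: ([A₀, B₀] ++ Γ)) C :=
        permh d (List.perm_middle (a := GTy.inter A₀ B₀) (l₁ := [A₀, B₀]) (l₂ := Γ))
      have d2 : ISCh w n (A₀ :: B₀ :: A₀ :: B₀ :: Γ) C := invLh d1 rfl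
      have d3 : ISCh w n (A₀ :: A₀ :: B₀ :: B₀ :: Γ) C :=
        permh d2 ((List.Perm.swap A₀ B₀ (B₀ :: Γ)).cons A₀)
      have d4 : ISCh w n (A₀ :: B₀ :: B₀ :: Γ) C := ctrh hw n d3 rfl
      have d5 : ISCh w n ([B₀, B₀] ++ A₀ :: Γ) C :=
        permh d4 (List.perm_middle (a := A₀) (l₁ := [B₀, B₀]) (l₂ := Γ)).symm
      have d6 : ISCh w n (B₀ :: A₀ :: Γ) C := ctrh hw n d5 rfl
      have d7 : ISCh w n (A₀ :: B₀ :: Γ) C := permh d6 (List.Perm.swap A₀ B₀ Γ)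
      exact ISCh.interL (Γ := []) d7
    · simp only [List.cons_append, List.nil_append] at hΔ d
      have h1 : X1 = E := (List.cons.inj hΔ).1
      have h2 := (List.cons.inj hΔ).2
      have hE : GTy.inter A₀ B₀ = E := (List.cons.inj h2).1
      have h4 : Δ₀ = Γ := (List.cons.inj h2).2
      rw [h1, h4, ← hE] at d
      rw [← hE]
      have d2 : ISCh w n (A₀ :: B₀ :: A₀ :: B₀ :: Γ) C := invLh d rfl
      have d3 : ISCh w n (A₀ :: A₀ :: B₀ :: B₀ :: Γ) C :=
        permh d2 ((List.Perm.swap A₀ B₀ (B₀ :: Γ)).cons A₀)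
      have d4 : ISCh w n (A₀ :: B₀ :: B₀ :: Γ) C := ctrh hw n d3 rfl
      have d5 : ISCh w n ([B₀, B₀] ++ A₀ :: Γ) C :=
        permh d4 (List.perm_middle (a := A₀) (l₁ := [B₀, B₀]) (l₂ := Γ)).symm
      have d6 : ISCh w n (B₀ :: A₀ :: Γ) C := ctrh hw n d5 rfl
      have d7 : ISCh w n (A₀ :: B₀ :: Γ) C := permh d6 (List.Perm.swap A₀ B₀ Γ)
      exact ISCh.interL (Γ := []) d7
    · simp only [List.cons_append] at hΔ d
      have h1 : X1 = E := (List.cons.inj hΔ).1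
      have h2 := (List.cons.inj hΔ).2
      have h3 : X2 = E := (List.cons.inj h2).1
      have h4 : Γ₀ ++ GTy.inter A₀ B₀ :: Δ₀ = Γ := (List.cons.inj h2).2
      rw [h1, h3] at d
      have d' : ISCh w n (E :: E :: (Γ₀ ++ A₀ :: B₀ :: Δ₀)) C := d
      have hc := ctrh hw n d' rfl
      have := ISCh.interL (Γ := E :: Γ₀) (A := A₀) (B := B₀) (Δ := Δ₀) hc
      rw [show (E :: Γ₀) ++ GTy.inter A₀ B₀ :: Δ₀ = E :: Γ by rw [← h4]; rfl] at this
      exact this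
  | @constr n κ k hk As Bs A B h1 h2 =>
    match k, hk, As, Bs, h1, h2, hΔ with
    | 0, _, _, _, _, _, hΔ => simp at hΔ
    | 1, _, _, _, _, _, hΔ => simp [List.ofFn_succ] at hΔ
    | k + 2, hk, As, Bs, h1, h2, hΔ =>
      rw [List.ofFn_succ, List.ofFn_succ] at hΔ
      have e1 : GTy.cons κ (fun j => As j 0) (fun j => Bs j 0) = E := (List.cons.inj hΔ).1
      have hΔ2 := (List.cons.inj hΔ).2
      have e2 : GTy.cons κ (fun j => As j (0 : Fin (k + 1)).succ)
          (fun j => Bs j (0 : Fin (k + 1)).succ) = E := (List.cons.inj hΔ2).1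
      have e3 : (List.ofFn fun i : Fin k =>
          GTy.cons κ (fun j => As j i.succ.succ) fun j => Bs j i.succ.succ) = Γ :=
        (List.cons.inj hΔ2).2
      have eC := e1.trans e2.symm
      injection eC with hκ hf hg
      have hg' : (fun j => Bs j 0) = fun j => Bs j (0 : Fin (k + 1)).succ := hg
      set As' : Fin (c κ) → Fin (k + 1) → GTy K c v :=
        fun j i => Fin.cases (As j 0) (fun i' => As j i'.succ.succ) i with hAs'
      set Bs' : Fin (v κ) → Fin (k + 1) → GTy K c v :=
        fun j i => Fin.cases (Bs j 0) (fun i' => Bs j i'.succ.succ) i with hBs'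
      have p1 : ∀ j i, ISCh w n [A j] (As' j i) := by
        intro j i
        refine Fin.cases ?_ ?_ i
        · simpa [hAs'] using h1 j 0
        · intro i'
          simpa [hAs'] using h1 j i'.succ.succ
      have p2 : ∀ j, ISCh w n (List.ofFn (Bs' j)) (B j) := by
        intro j
        have hb : Bs j (0 : Fin (k + 1)).succ = Bs j 0 := (congrFun hg' j).symm
        have horig := h2 j
        rw [List.ofFn_succ, List.ofFn_succ, hb] at horig
        have hctr := ctrh hw n horig rfl
        have hofn : List.ofFn (Bs' j) =
            Bs j 0 :: List.ofFn fun i : Fin k => Bs j i.succ.succ := by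
          rw [List.ofFn_succ]
          congr 1
        rw [hofn]
        exact hctr
      have key := ISCh.constr (w := w) κ (k + 1) (le_trans (hw κ) (by omega)) As' Bs' A B p1 p2
      have hhead : GTy.cons κ (fun j => As' j 0) (fun j => Bs' j 0) = E := by
        rw [← e1]
        simp only [hAs', hBs', Fin.cases_zero]
      have htail : (List.ofFn fun i : Fin k =>
          GTy.cons κ (fun j => As' j i.succ) fun j => Bs' j i.succ) = Γ := by
        rw [← e3]
        simp only [hAs', hBs', Fin.cases_succ]
      have hctx : (List.ofFn fun i => GTy.cons κ (fun j => As' j i) fun j => Bs' j i)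
          = E :: Γ := by
        rw [List.ofFn_succ, hhead, htail]
      rw [hctx] at key
      exact key
termination_by n

theorem permISC {Γ Γ' : List (GTy K c v)} {C : GTy K c v} (d : ISC w Γ C) (p : Γ.Perm Γ') :
    ISC w Γ' C := by
  obtain ⟨n, dh⟩ := toISCh d
  exact ofISCh (permh dh p)

theorem ctrISC (hw : ∀ κ, w κ ≤ 1) {E : GTy K c v} {Γ : List (GTy K c v)} {C : GTy K c v}
    (d : ISC w (E :: E :: Γ) C) : ISC w (E :: Γ) C := by
  obtain ⟨n, dh⟩ := toISCh d
  exact ofISCh (ctrh hw n dh rfl)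

theorem ctrList (hw : ∀ κ, w κ ≤ 1) :
    ∀ (Γ : List (GTy K c v)) {Δ : List (GTy K c v)} {C : GTy K c v},
    ISC w (Γ ++ (Γ ++ Δ)) C → ISC w (Γ ++ Δ) C := by
  intro Γ
  induction Γ with
  | nil => intro Δ C d; exact d
  | cons X Γ' ih =>
    intro Δ C d
    have p1 : (X :: (Γ' ++ (X :: (Γ' ++ Δ)))).Perm (X :: X :: (Γ' ++ (Γ' ++ Δ))) :=
      (List.perm_middle (a := X) (l₁ := Γ') (l₂ := Γ' ++ Δ)).cons X
    have d2 := ctrISC hw (permISC d p1)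
    have q1 : (X :: (Γ' ++ (Γ' ++ Δ))).Perm (Γ' ++ (X :: (Γ' ++ Δ))) :=
      (List.perm_middle (a := X) (l₁ := Γ') (l₂ := Γ' ++ Δ)).symm
    have q2 : (X :: (Γ' ++ Δ)).Perm (Γ' ++ X :: Δ) :=
      (List.perm_middle (a := X) (l₁ := Γ') (l₂ := Δ)).symm
    have d3 := permISC d2 (q1.trans (List.Perm.append_left Γ' q2))
    have d4 := ih (Δ := X :: Δ) d3
    exact permISC d4 (List.perm_middle (a := X) (l₁ := Γ') (l₂ := Δ))

theorem cut (hw : ∀ κ, w κ ≤ 1) (E : GTy K c v) (n₂ n₁ : ℕ)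
    {Θ Γ Δ : List (GTy K c v)} {C : GTy K c v}
    (d1 : ISCh w n₁ Γ E) (d2 : ISCh w n₂ Θ C) (hΘ : Θ = E :: Δ) :
    ISC w (Γ ++ Δ) C := by
  cases d2 with
  | @wk n₂' Γ₀ Δ₀ C κ f g d2' =>
    rcases Γ₀ with _ | ⟨X, Γ₀⟩
    · simp only [List.nil_append] at hΘ d2'
      have h2 : Δ₀ = Δ := (List.cons.inj hΘ).2
      rw [h2] at d2'
      exact weakens Γ (ofISCh d2')
    · simp only [List.cons_append] at hΘ d2'
      have h1 : X = E := (List.cons.inj hΘ).1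
      have h2 : Γ₀ ++ GTy.cons κ f g :: Δ₀ = Δ := (List.cons.inj hΘ).2
      rw [h1] at d2'
      have hrec := cut hw E n₂' n₁ d1 d2' rfl
      rw [← List.append_assoc] at hrec
      have := ISC.wk (Γ := Γ ++ Γ₀) (Δ := Δ₀) κ f g hrec
      rw [List.append_assoc, h2] at this
      exact this
  | @interR n₂' Θ A B da db =>
    subst hΘ
    exact ISC.interR (cut hw E n₂' n₁ d1 da rfl) (cut hw E n₂' n₁ d1 db rfl)
  | @interL n₂' Γ₀ Δ₀ A B C d2' =>
    rcases Γ₀ with _ | ⟨X, Γ₀⟩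
    · simp only [List.nil_append] at hΘ d2'
      have h1 : GTy.inter A B = E := (List.cons.inj hΘ).1
      have h2 : Δ₀ = Δ := (List.cons.inj hΘ).2
      subst h1
      rw [h2] at d2'
      obtain ⟨dA, dB⟩ := invR (ofISCh d1) rfl
      obtain ⟨mA, dAh⟩ := toISCh dA
      have r1 : ISC w (Γ ++ (B :: Δ)) C := cut hw A n₂' mA dAh d2' rfl
      obtain ⟨m1, r1h⟩ := toISCh r1
      have r1p : ISCh w m1 (B :: (Γ ++ Δ)) C :=
        permh r1h (List.perm_middle (a := B) (l₁ := Γ) (l₂ := Δ))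
      obtain ⟨mB, dBh⟩ := toISCh dB
      have r2 : ISC w (Γ ++ (Γ ++ Δ)) C := cut hw B m1 mB dBh r1p rfl
      exact ctrList hw Γ r2
    · simp only [List.cons_append] at hΘ d2'
      have h1 : X = E := (List.cons.inj hΘ).1
      have h2 : Γ₀ ++ GTy.inter A B :: Δ₀ = Δ := (List.cons.inj hΘ).2
      rw [h1] at d2'
      have hrec := cut hw E n₂' n₁ d1 d2' rfl
      rw [← List.append_assoc] at hrec
      have := ISC.interL (Γ := Γ ++ Γ₀) (Δ := Δ₀) hrec
      rw [List.append_assoc, h2] at this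
      exact this
  | @constr n₂' κ k hk As Bs A B q1 q2 =>
    match k, hk, As, Bs, q1, q2, hΘ with
    | 0, _, _, _, _, _, hΘ => simp at hΘ
    | k + 1, hk, As, Bs, q1, q2, hΘ =>
      rw [List.ofFn_succ] at hΘ
      have hE : GTy.cons κ (fun j => As j 0) (fun j => Bs j 0) = E := (List.cons.inj hΘ).1
      have hΔ : (List.ofFn fun i : Fin k =>
          GTy.cons κ (fun j => As j i.succ) fun j => Bs j i.succ) = Δ := (List.cons.inj hΘ).2
      subst hE
      subst hΔ
      cases d1 with
      | @wk n₁' Γ₁ Δ₁ _ κ₁ f₁ g₁ d1' =>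
        have d2R : ISCh w (n₂' + 1)
            (List.ofFn fun i : Fin (k + 1) => GTy.cons κ (fun j => As j i) fun j => Bs j i)
            (GTy.cons κ A B) := ISCh.constr κ (k + 1) hk As Bs A B q1 q2
        rw [List.ofFn_succ
          (f := fun i : Fin (k + 1) => GTy.cons κ (fun j => As j i) fun j => Bs j i)] at d2R
        have hrec := cut hw _ (n₂' + 1) n₁' d1' d2R rfl
        rw [List.append_assoc] at hrec
        have hwk := ISC.wk (Γ := Γ₁) (Δ := Δ₁ ++ _) κ₁ f₁ g₁ hrec
        simpa [List.append_assoc] using hwk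
      | @interL n₁' Γ₁ Δ₁ A₁ B₁ _ d1' =>
        have d2R : ISCh w (n₂' + 1)
            (List.ofFn fun i : Fin (k + 1) => GTy.cons κ (fun j => As j i) fun j => Bs j i)
            (GTy.cons κ A B) := ISCh.constr κ (k + 1) hk As Bs A B q1 q2
        rw [List.ofFn_succ
          (f := fun i : Fin (k + 1) => GTy.cons κ (fun j => As j i) fun j => Bs j i)] at d2R
        have hrec := cut hw _ (n₂' + 1) n₁' d1' d2R rfl
        rw [List.append_assoc] at hrec
        have hwk := ISC.interL (Γ := Γ₁) (Δ := Δ₁ ++ _) (A := A₁) (B := B₁) hrec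
        simpa [List.append_assoc] using hwk
      | @constr n₁' κ' m hm As' Bs' A'' B'' r1 r2 =>
        set As2 : Fin (c κ) → Fin (m + k) → GTy K c v :=
          fun j => Fin.append (As' j) fun i : Fin k => As j i.succ with hAs2
        set Bs2 : Fin (v κ) → Fin (m + k) → GTy K c v :=
          fun j => Fin.append (Bs' j) fun i : Fin k => Bs j i.succ with hBs2
        have p1 : ∀ (j : Fin (c κ)) (i : Fin (m + k)), ISC w [A j] (As2 j i) := by
          intro j i
          refine Fin.addCases (fun i₀ => ?_) (fun i₁ => ?_) i
          · simp only [hAs2, Fin.append_left]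
            have hcc := cut hw (As j 0) n₁' n₂' (q1 j 0) (r1 j i₀) rfl
            simpa using hcc
          · simp only [hAs2, Fin.append_right]
            exact ofISCh (q1 j i₁.succ)
        have p2 : ∀ (j : Fin (v κ)), ISC w (List.ofFn (Bs2 j)) (B j) := by
          intro j
          simp only [hBs2, List.ofFn_fin_append]
          have hq := q2 j
          rw [List.ofFn_succ] at hq
          exact cut hw (Bs j 0) n₂' n₁' (r2 j) hq rfl
        have key := ISC.constr (w := w) κ (m + k) (le_trans hm (Nat.le_add_right m k))
          As2 Bs2 A B p1 p2
        have hfun : (fun i : Fin (m + k) =>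
              GTy.cons κ (fun j => As2 j i) fun j => Bs2 j i)
            = Fin.append (fun i : Fin m => GTy.cons κ (fun j => As' j i) fun j => Bs' j i)
                (fun i : Fin k => GTy.cons κ (fun j => As j i.succ) fun j => Bs j i.succ) := by
          funext i
          refine Fin.addCases (fun i₀ => ?_) (fun i₁ => ?_) i
          · simp [hAs2, hBs2, Fin.append_left]
          · simp [hAs2, hBs2, Fin.append_right]
        rw [hfun, List.ofFn_fin_append] at key
        exact key
termination_by (gsize E, n₂, n₁)
decreasing_by
  all_goals simp_wf
  all_goals try subst_vars
  all_goals
    first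
      | (apply Prod.Lex.right; apply Prod.Lex.left; omega)
      | (apply Prod.Lex.right; apply Prod.Lex.right; omega)
      | (apply Prod.Lex.left
         first
           | exact gsize_lt_inter_l _ _
           | exact gsize_lt_inter_r _ _
           | exact gsize_lt_cons_l' _ _ _ _ rfl
           | exact gsize_lt_cons_r' _ _ _ _ rfl)

theorem refl (hw : ∀ κ, w κ ≤ 1) : ∀ (A : GTy K c v), ISC w [A] A := by
  intro A
  induction A with
  | inter A B ihA ihB =>
    refine ISC.interR ?_ ?_
    · exact ISC.interL (Γ := []) (weaken B [A] [] A ihA)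
    · exact ISC.interL (Γ := []) (weaken A [] [B] B ihB)
  | cons κ f g ihf ihg =>
    have key := ISC.constr (w := w) κ 1 (hw κ) (fun j _ => f j) (fun j _ => g j) f g
      (fun j _ => ihf j) (fun j => by simpa using ihg j)
    simpa using key

theorem trans (hw : ∀ κ, w κ ≤ 1) {A B C : GTy K c v}
    (d1 : ISC w [A] B) (d2 : ISC w [B] C) : ISC w [A] C := by
  obtain ⟨n1, h1⟩ := toISCh d1
  obtain ⟨n2, h2⟩ := toISCh d2
  simpa using cut hw B n2 n1 h1 h2 rfl

theorem top (Ω : K) (hc : c Ω = 0) (hv : v Ω = 0) (hΩ : w Ω = 0)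
    (f : Fin (c Ω) → GTy K c v) (g : Fin (v Ω) → GTy K c v) (A : GTy K c v) :
    ISC w [A] (GTy.cons Ω f g) := by
  have base := ISC.constr (w := w) Ω 0 (by omega)
    (fun j => Fin.elim0) (fun j => Fin.elim0) f g
    (fun j i => i.elim0)
    (fun j => absurd j.isLt (by omega))
  have base' : ISC w [] (GTy.cons Ω f g) := by simpa using base
  exact weaken A [] [] (GTy.cons Ω f g) base'

end ISCKernel

/-- Kernel properties of the subtyping relation `A ≤ B` defined by
derivability of `A ⊢ A` in ISC: reflexivity, transitivity, the intersection
is a greatest lower bound, and any constructor `Ω` with zero arities and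
width 0 is a top element. -/
theorem ISC.kernel {K : Type} {c v : K → ℕ} (w : K → ℕ) (hw : ∀ κ, w κ ≤ 1) :
    (∀ A : GTy K c v, ISC w [A] A) ∧
    (∀ A B C : GTy K c v, ISC w [A] B → ISC w [B] C → ISC w [A] C) ∧
    (∀ A B : GTy K c v, ISC w [GTy.inter A B] A) ∧
    (∀ A B : GTy K c v, ISC w [GTy.inter A B] B) ∧
    (∀ A B C : GTy K c v, ISC w [C] A → ISC w [C] B → ISC w [C] (GTy.inter A B)) ∧
    (∀ Ω : K, c Ω = 0 → v Ω = 0 → w Ω = 0 →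
      ∀ (f : Fin (c Ω) → GTy K c v) (g : Fin (v Ω) → GTy K c v) (A : GTy K c v),
        ISC w [A] (GTy.cons Ω f g)) := by
  refine ⟨ISCKernel.refl hw, fun A B C => ISCKernel.trans hw, ?_, ?_, ?_, ?_⟩
  · intro A B
    exact ISC.interL (Γ := []) (ISCKernel.weaken B [A] [] A (ISCKernel.refl hw A))
  · intro A B
    exact ISC.interL (Γ := []) (ISCKernel.weaken A [] [B] B (ISCKernel.refl hw B))
  · intro A B C dA dB
    exact ISC.interR dA dB
  · intro Ω hc hv hΩ f g A
    exact ISCKernel.top Ω hc hv hΩ f g A
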